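/- The S lex-cel solution R^SL satisfies concatenation consistency (CCON) but satisfies neither top-aligned consistency (TCON) nor bottom-aligned consistency (BCON). -/

import Mathlib

namespace SocRank

/-- A coalitional ranking (a weak order on a set of feasible nonempty coalitions),
represented by its list of equivalence classes, listed from best to worst. -/
structure CoalRanking (X : Type*) where
  classes : List (Finset (Finset X))
  class_nonempty : ∀ C ∈ classes, C.Nonempty
  coal_nonempty : ∀ C ∈ classes, ∀ S ∈ C, S.Nonempty
  classes_disjoint : classes.Pairwise Disjoint

namespace CoalRanking

variable {X : Type*}

/-- The coalition domain `𝒟(≿)` of a coalitional ranking. -/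
def domain [DecidableEq X] (r : CoalRanking X) : Finset (Finset X) :=
  r.classes.foldr (· ∪ ·) ∅

/-- The list of equivalence classes of the restriction of a ranking to a set `D`
of coalitions. -/
def restrictClasses [DecidableEq X] (r : CoalRanking X) (D : Finset (Finset X)) :
    List (Finset (Finset X)) :=
  (r.classes.map (· ∩ D)).filter (fun C => decide C.Nonempty)

/-- Merging two lists of equivalence classes by aligning them at the top. -/
def zipUnion [DecidableEq X] :
    List (Finset (Finset X)) → List (Finset (Finset X)) → List (Finset (Finset X))
  | [], M => M
  | L, [] => L
  | A :: L, B :: M => (A ∪ B) :: zipUnion L M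

/-- `r` is a sum of the disjoint rankings `r₁` and `r₂`: its domain is the union of
the two domains and its restriction to the domain of `rᵢ` is `rᵢ`. -/
def IsSum [DecidableEq X] (r r₁ r₂ : CoalRanking X) : Prop :=
  Disjoint r₁.domain r₂.domain ∧
  r.domain = r₁.domain ∪ r₂.domain ∧
  r.restrictClasses r₁.domain = r₁.classes ∧
  r.restrictClasses r₂.domain = r₂.classes

/-- `r` is the concatenation sum `r₁ · r₂` of the disjoint rankings `r₁` and `r₂`. -/
def IsConcatSum [DecidableEq X] (r r₁ r₂ : CoalRanking X) : Prop :=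
  Disjoint r₁.domain r₂.domain ∧ r.classes = r₁.classes ++ r₂.classes

/-- `r` is the top-aligned sum `r₁ ⊨ r₂` of the disjoint rankings `r₁` and `r₂`. -/
def IsTopAlignedSum [DecidableEq X] (r r₁ r₂ : CoalRanking X) : Prop :=
  Disjoint r₁.domain r₂.domain ∧ r.classes = zipUnion r₁.classes r₂.classes

/-- `r` is the bottom-aligned sum `r₁ ⫤ r₂` of the disjoint rankings `r₁` and `r₂`. -/
def IsBottomAlignedSum [DecidableEq X] (r r₁ r₂ : CoalRanking X) : Prop :=
  Disjoint r₁.domain r₂.domain ∧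
  r.classes = (zipUnion r₁.classes.reverse r₂.classes.reverse).reverse

/-- Renaming the individuals of a coalitional ranking by a permutation `σ` of `X`:
the ranking `≿^σ`. -/
def mapPerm [DecidableEq X] (σ : Equiv.Perm X) (r : CoalRanking X) : CoalRanking X where
  classes := r.classes.map (fun C => C.image (fun S => S.image σ))
  class_nonempty := by
    intro C hC
    simp only [List.mem_map] at hC
    obtain ⟨C₀, hC₀, rfl⟩ := hC
    exact (r.class_nonempty C₀ hC₀).image _
  coal_nonempty := by
    intro C hC S hS
    simp only [List.mem_map] at hC
    obtain ⟨C₀, hC₀, rfl⟩ := hC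
    simp only [Finset.mem_image] at hS
    obtain ⟨S₀, hS₀, rfl⟩ := hS
    exact (r.coal_nonempty C₀ hC₀ S₀ hS₀).image _
  classes_disjoint := by
    refine List.Pairwise.map _ (fun {A B} h => ?_) r.classes_disjoint
    exact (Finset.disjoint_image
      (Finset.image_injective σ.injective)).mpr h

/-- Renaming the coalitions of a coalitional ranking by a permutation `π` of the set of
coalitions (mapping nonempty sets to nonempty sets): the ranking `≿_π`. -/
def mapCoalPerm [DecidableEq X] (π : Equiv.Perm (Finset X))
    (hπ : ∀ S : Finset X, S.Nonempty → (π S).Nonempty) (r : CoalRanking X) :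
    CoalRanking X where
  classes := r.classes.map (fun C => C.image π)
  class_nonempty := by
    intro C hC
    simp only [List.mem_map] at hC
    obtain ⟨C₀, hC₀, rfl⟩ := hC
    exact (r.class_nonempty C₀ hC₀).image _
  coal_nonempty := by
    intro C hC S hS
    simp only [List.mem_map] at hC
    obtain ⟨C₀, hC₀, rfl⟩ := hC
    simp only [Finset.mem_image] at hS
    obtain ⟨S₀, hS₀, rfl⟩ := hS
    exact hπ S₀ (r.coal_nonempty C₀ hC₀ S₀ hS₀)
  classes_disjoint := by
    refine List.Pairwise.map _ (fun {A B} h => ?_) r.classes_disjoint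
    exact (Finset.disjoint_image π.injective).mpr h

end CoalRanking

open CoalRanking

variable {X : Type*}

/-- A social ranking solution: a map assigning to every coalitional ranking a binary
relation on the individuals. -/
abbrev SRSMap (X : Type*) := CoalRanking X → X → X → Prop

/-- The symmetric part `I` of the social ranking. -/
def Ind (R : SRSMap X) (r : CoalRanking X) (x y : X) : Prop := R r x y ∧ R r y x

/-- The asymmetric part `P` of the social ranking. -/
def Pref (R : SRSMap X) (r : CoalRanking X) (x y : X) : Prop := R r x y ∧ ¬ R r y x

/-- Conditions (1)-(4) of consistency for the triple `(r₁, r₂, r)`. -/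
def ConsistentAt (R : SRSMap X) (r₁ r₂ r : CoalRanking X) : Prop :=
  ∀ x y : X,
    (Ind R r₁ x y → Ind R r₂ x y → Ind R r x y) ∧
    (Ind R r₁ x y → Pref R r₂ x y → Pref R r x y) ∧
    (Pref R r₁ x y → Ind R r₂ x y → Pref R r x y) ∧
    (Pref R r₁ x y → Pref R r₂ x y → Pref R r x y)

/-- Consistency (CON). -/
def CON [DecidableEq X] (R : SRSMap X) : Prop :=
  ∀ r₁ r₂ r : CoalRanking X, IsSum r r₁ r₂ → ConsistentAt R r₁ r₂ r

/-- Concatenation consistency (CCON). -/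
def CCON [DecidableEq X] (R : SRSMap X) : Prop :=
  ∀ r₁ r₂ r : CoalRanking X, IsConcatSum r r₁ r₂ → ConsistentAt R r₁ r₂ r

/-- Top-aligned consistency (TCON). -/
def TCON [DecidableEq X] (R : SRSMap X) : Prop :=
  ∀ r₁ r₂ r : CoalRanking X, IsTopAlignedSum r r₁ r₂ → ConsistentAt R r₁ r₂ r

/-- Bottom-aligned consistency (BCON). -/
def BCON [DecidableEq X] (R : SRSMap X) : Prop :=
  ∀ r₁ r₂ r : CoalRanking X, IsBottomAlignedSum r r₁ r₂ → ConsistentAt R r₁ r₂ r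

/-- II-concatenation consistency. -/
def IICCON [DecidableEq X] (R : SRSMap X) : Prop :=
  ∀ r₁ r₂ r : CoalRanking X, IsConcatSum r r₁ r₂ →
    ∀ x y : X, Ind R r₁ x y → Ind R r₂ x y → Ind R r x y

/-- IP-concatenation consistency. -/
def IPCCON [DecidableEq X] (R : SRSMap X) : Prop :=
  ∀ r₁ r₂ r : CoalRanking X, IsConcatSum r r₁ r₂ →
    ∀ x y : X, Ind R r₁ x y → Pref R r₂ x y → Pref R r x y

/-- PI-concatenation consistency. -/
def PICCON [DecidableEq X] (R : SRSMap X) : Prop :=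
  ∀ r₁ r₂ r : CoalRanking X, IsConcatSum r r₁ r₂ →
    ∀ x y : X, Pref R r₁ x y → Ind R r₂ x y → Pref R r x y

/-- PP-concatenation consistency. -/
def PPCCON [DecidableEq X] (R : SRSMap X) : Prop :=
  ∀ r₁ r₂ r : CoalRanking X, IsConcatSum r r₁ r₂ →
    ∀ x y : X, Pref R r₁ x y → Pref R r₂ x y → Pref R r x y

/-- `x_k`: the number of coalitions of the class `C` containing `x`. -/
def cnt [DecidableEq X] (x : X) (C : Finset (Finset X)) : ℕ :=
  (C.filter (fun S => x ∈ S)).card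

/-- The vector `θ_≿(x) = (x₁, …, x_l)`. -/
def theta [DecidableEq X] (r : CoalRanking X) (x : X) : List ℕ :=
  r.classes.map (cnt x)

/-- `sign`: `1` on positive numbers, `0` otherwise. -/
def sgn (n : ℕ) : ℕ := if 0 < n then 1 else 0

/-- The vector `θ̇_≿(x) = (sign(x₁), …, sign(x_l))`. -/
def thetaDot [DecidableEq X] (r : CoalRanking X) (x : X) : List ℕ :=
  (theta r x).map sgn

/-- The lexicographic order `≥^L` on vectors (of equal length). -/
def lexGE : List ℕ → List ℕ → Prop
  | _, [] => True
  | [], _ :: _ => False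
  | a :: as, b :: bs => b < a ∨ (a = b ∧ lexGE as bs)

/-- The lexicographic excellence solution (lex-cel) `R^L`. -/
def lexcel [DecidableEq X] : SRSMap X := fun r x y => lexGE (theta r x) (theta r y)

/-- The sign lexicographic excellence solution (S lex-cel) `R^{SL}`. -/
def slexcel [DecidableEq X] : SRSMap X := fun r x y => lexGE (thetaDot r x) (thetaDot r y)

/-- The plurality solution `R^P`. -/
def plurality [DecidableEq X] : SRSMap X := fun r x y =>
  (theta r y).headD 0 ≤ (theta r x).headD 0

/-- The sign plurality solution `R^{SP}`. -/
def splurality [DecidableEq X] : SRSMap X := fun r x y =>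
  sgn ((theta r y).headD 0) ≤ sgn ((theta r x).headD 0)

/-- The anti-plurality solution `R^{AP}`. -/
def antiplurality [DecidableEq X] : SRSMap X := fun r x y =>
  (theta r x).getLastD 0 ≤ (theta r y).getLastD 0

/-- `e_≿(x)`: the largest `k` such that `x` belongs to every coalition of each of the
first `k` equivalence classes. -/
def eIIS [DecidableEq X] (r : CoalRanking X) (x : X) : ℕ :=
  (r.classes.takeWhile (fun C => decide (∀ S ∈ C, x ∈ S))).length

/-- The intersection initial segment solution (IIS) `R^{IIS}`. -/
def iis [DecidableEq X] : SRSMap X := fun r x y => eIIS r y ≤ eIIS r x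

/-- The index of the equivalence class a coalition belongs to. -/
def classIdx [DecidableEq X] (r : CoalRanking X) (S : Finset X) : ℕ :=
  r.classes.findIdx (fun C => decide (S ∈ C))

/-- `C_{xy}`: the number of CP comparisons in favour of `x` against `y`. -/
def cpCount [DecidableEq X] [Fintype X] (r : CoalRanking X) (x y : X) : ℕ :=
  ((Finset.univ : Finset (Finset X)).filter (fun S =>
    S.Nonempty ∧ x ∉ S ∧ y ∉ S ∧ insert x S ∈ r.domain ∧ insert y S ∈ r.domain ∧
    classIdx r (insert x S) < classIdx r (insert y S))).card

/-- The Ceteris Paribus majority solution `R^{CPM}`. -/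
def cpm [DecidableEq X] [Fintype X] : SRSMap X := fun r x y =>
  cpCount r y x ≤ cpCount r x y

/-- Neutrality (NT). -/
def NT [DecidableEq X] (R : SRSMap X) : Prop :=
  ∀ (σ : Equiv.Perm X) (r : CoalRanking X) (x y : X),
    R (r.mapPerm σ) (σ x) (σ y) ↔ R r x y

/-- Weak coalitional anonymity (WCA). -/
def WCA [DecidableEq X] (R : SRSMap X) : Prop :=
  ∀ (x y : X) (π : Equiv.Perm (Finset X))
    (hπ : ∀ S : Finset X, S.Nonempty → (π S).Nonempty),
    (∀ S : Finset X, x ∈ S → x ∈ π S) → (∀ S : Finset X, y ∈ S → y ∈ π S) →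
    ∀ r : CoalRanking X,
      (R (r.mapCoalPerm π hπ) x y ↔ R r x y) ∧ (R (r.mapCoalPerm π hπ) y x ↔ R r y x)

/-- The weak union very important person property (WUVIP). -/
def WUVIP (R : SRSMap X) : Prop :=
  ∀ (r : CoalRanking X) (A B : Finset (Finset X)), r.classes = [A, B] →
    ∀ x y : X, (∃ S ∈ A, x ∈ S) → (∀ S ∈ A, y ∉ S) → Pref R r x y

/-- All indifference all winners (AIAW). -/
def AIAW [DecidableEq X] (R : SRSMap X) : Prop :=
  ∀ r : CoalRanking X, r.classes.length ≤ 1 →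
    (∀ x y : X, (∃ S ∈ r.domain, x ∈ S) → (∃ S ∈ r.domain, y ∈ S) → Ind R r x y) ∧
    (∀ x z : X, (∃ S ∈ r.domain, x ∈ S) → (∀ S ∈ r.domain, z ∉ S) → Pref R r x z)

/-- Independence of the decomposition of the worst sets (IDWS). -/
def IDWS [DecidableEq X] (R : SRSMap X) : Prop :=
  ∀ (r r' : CoalRanking X) (L G : List (Finset (Finset X))) (W : Finset (Finset X)),
    L ≠ [] → r.classes = L ++ [W] → r'.classes = L ++ G →
    G.foldr (· ∪ ·) ∅ = W →
    ∀ x y : X, Pref R r x y → Pref R r' x y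

/-- Independence of the addition of the worst sets (IAWS). -/
def IAWS [DecidableEq X] (R : SRSMap X) : Prop :=
  ∀ (r r' : CoalRanking X) (G : Finset (Finset X)),
    r'.classes = r.classes ++ [G] → (∀ S ∈ G, S ∉ r.domain) →
    ∀ x y : X, Pref R r x y → Pref R r' x y

/-- Tops-only (TO). -/
def TO (R : SRSMap X) : Prop :=
  ∀ (r r' : CoalRanking X) (A : Finset (Finset X)),
    r.classes.head? = some A → r'.classes.head? = some A → R r = R r'

/-- The dual S lex-cel `R^{DSL}`. -/
def dslexcel [DecidableEq X] : SRSMap X := fun r x y =>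
  lexGE ((thetaDot r y).reverse) ((thetaDot r x).reverse)

/-- The inverse dual S lex-cel `R^{IDSL}`. -/
def idslexcel [DecidableEq X] : SRSMap X := fun r x y => dslexcel r y x

/-- The vector `θ̃_≿(x)` used by the S lex-cel with precedence on unanimity. -/
def tildeTheta [DecidableEq X] (r : CoalRanking X) (x : X) : List ℕ :=
  r.classes.map (fun C => if cnt x C = C.card then 2 else if 0 < cnt x C then 1 else 0)

/-- The S lex-cel with a particular precedence on unanimity `R^{SLUN}`. -/
def slun [DecidableEq X] : SRSMap X := fun r x y =>
  lexGE (tildeTheta r x) (tildeTheta r y)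

/-- The S sum score `Σ_k sign(x_k)`. -/
def ssum [DecidableEq X] (r : CoalRanking X) (x : X) : ℕ := (thetaDot r x).sum

/-- The S sum rule with tie-breaking by S lex-cel `R^{SSUM,SL}`. -/
def ssumSL [DecidableEq X] : SRSMap X := fun r x y =>
  ssum r y < ssum r x ∨ (ssum r x = ssum r y ∧ slexcel r x y)

end SocRank

namespace SocRank

lemma lexGE_refl : ∀ a : List ℕ, lexGE a a
  | [] => trivial
  | _ :: as => Or.inr ⟨rfl, lexGE_refl as⟩

lemma lexGE_antisymm : ∀ {a b : List ℕ}, a.length = b.length →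
    lexGE a b → lexGE b a → a = b
  | [], [], _, _, _ => rfl
  | [], _ :: _, h, _, _ => by simp at h
  | _ :: _, [], h, _, _ => by simp at h
  | a :: as, b :: bs, h, hab, hba => by
    simp only [lexGE] at hab hba
    rcases hab with h1 | ⟨rfl, h2⟩
    · rcases hba with h3 | ⟨h3, _⟩ <;> omega
    · rcases hba with h3 | ⟨_, h4⟩
      · omega
      · simp only [List.length_cons, Nat.add_right_cancel_iff] at h
        rw [lexGE_antisymm h h2 h4]

lemma lexGE_append_same : ∀ (p a b : List ℕ), lexGE (p ++ a) (p ++ b) ↔ lexGE a b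
  | [], _, _ => Iff.rfl
  | c :: p, a, b => by
    show lexGE (c :: (p ++ a)) (c :: (p ++ b)) ↔ lexGE a b
    simp only [lexGE, lt_irrefl, false_or, true_and]
    exact lexGE_append_same p a b

lemma lexGT_append : ∀ (a b : List ℕ), a.length = b.length →
    lexGE a b → ¬ lexGE b a →
    ∀ a₂ b₂ : List ℕ, lexGE (a ++ a₂) (b ++ b₂) ∧ ¬ lexGE (b ++ b₂) (a ++ a₂)
  | [], [], _, _, hn, _, _ => absurd trivial hn
  | [], _ :: _, h, _, _, _, _ => by simp at h
  | _ :: _, [], h, _, _, _, _ => by simp at h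
  | a :: as, b :: bs, h, hab, hnba, a₂, b₂ => by
    simp only [List.length_cons, Nat.add_right_cancel_iff] at h
    simp only [lexGE, not_or, not_and] at hab hnba
    rcases hab with h1 | ⟨rfl, h2⟩
    · refine ⟨Or.inl h1, ?_⟩
      simp only [List.cons_append, lexGE, not_or, not_and]
      exact ⟨by omega, fun hba => by omega⟩
    · have hn2 : ¬ lexGE bs as := hnba.2 rfl
      obtain ⟨g1, g2⟩ := lexGT_append as bs h h2 hn2 a₂ b₂
      refine ⟨Or.inr ⟨rfl, g1⟩, ?_⟩
      simp only [List.cons_append, lexGE, not_or, not_and]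
      exact ⟨by omega, fun _ => g2⟩

variable {X : Type*} [DecidableEq X]

lemma sgn_cnt (x : X) (C : Finset (Finset X)) :
    sgn (cnt x C) = if ∃ S ∈ C, x ∈ S then 1 else 0 := by
  unfold sgn cnt
  by_cases h : ∃ S ∈ C, x ∈ S
  · rw [if_pos h, if_pos]
    obtain ⟨S, hS, hx⟩ := h
    exact Finset.card_pos.2 ⟨S, Finset.mem_filter.2 ⟨hS, hx⟩⟩
  · rw [if_neg h, if_neg]
    intro hc
    obtain ⟨S, hS⟩ := Finset.card_pos.1 hc
    exact h ⟨S, (Finset.mem_filter.1 hS).1, (Finset.mem_filter.1 hS).2⟩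

lemma thetaDot_length (r : CoalRanking X) (x : X) :
    (thetaDot r x).length = r.classes.length := by
  simp [thetaDot, theta]

lemma ind_slexcel_iff (r : CoalRanking X) (x y : X) :
    Ind (slexcel : SRSMap X) r x y ↔ thetaDot r x = thetaDot r y := by
  constructor
  · rintro ⟨h1, h2⟩
    exact lexGE_antisymm (by rw [thetaDot_length, thetaDot_length]) h1 h2
  · intro h
    exact ⟨by rw [slexcel, h]; exact lexGE_refl _, by rw [slexcel, h]; exact lexGE_refl _⟩

lemma slexcel_CCON : CCON (slexcel : SRSMap X) := by
  rintro r₁ r₂ r ⟨hdisj, hcl⟩ x y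
  have hθ : ∀ w : X, thetaDot r w = thetaDot r₁ w ++ thetaDot r₂ w := by
    intro w; simp [thetaDot, theta, hcl]
  have hlen : (thetaDot r₁ x).length = (thetaDot r₁ y).length := by
    rw [thetaDot_length, thetaDot_length]
  refine ⟨?_, ?_, ?_, ?_⟩
  · intro h1 h2
    rw [ind_slexcel_iff] at h1 h2 ⊢
    rw [hθ, hθ, h1, h2]
  · intro h1 h2
    rw [ind_slexcel_iff] at h1
    obtain ⟨h2a, h2b⟩ := h2
    constructor
    · show lexGE _ _
      rw [hθ, hθ, h1, lexGE_append_same]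
      exact h2a
    · show ¬ lexGE _ _
      rw [hθ, hθ, h1, lexGE_append_same]
      exact h2b
  · intro h1 _
    obtain ⟨h1a, h1b⟩ := h1
    obtain ⟨g1, g2⟩ := lexGT_append _ _ hlen h1a h1b (thetaDot r₂ x) (thetaDot r₂ y)
    exact ⟨by rw [slexcel, hθ, hθ]; exact g1, by rw [slexcel, hθ, hθ]; exact g2⟩
  · intro h1 _
    obtain ⟨h1a, h1b⟩ := h1
    obtain ⟨g1, g2⟩ := lexGT_append _ _ hlen h1a h1b (thetaDot r₂ x) (thetaDot r₂ y)
    exact ⟨by rw [slexcel, hθ, hθ]; exact g1, by rw [slexcel, hθ, hθ]; exact g2⟩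

section Counterexample

variable (x y z : X)

/-- `r₁`: `{x} ≻ {y}`. -/
def ceR1 (hxy : x ≠ y) : CoalRanking X where
  classes := [({({x} : Finset X)} : Finset (Finset X)), ({({y} : Finset X)} : Finset (Finset X))]
  class_nonempty := by
    intro C hC
    simp only [List.mem_cons, List.not_mem_nil, or_false] at hC
    rcases hC with rfl | rfl <;> exact Finset.singleton_nonempty _
  coal_nonempty := by
    intro C hC S hS
    simp only [List.mem_cons, List.not_mem_nil, or_false] at hC
    rcases hC with rfl | rfl <;>
      · rw [Finset.mem_singleton] at hS; subst hS; exact Finset.singleton_nonempty _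
  classes_disjoint := by
    refine List.Pairwise.cons ?_ (List.pairwise_singleton _ _)
    intro B hB
    simp only [List.mem_cons, List.not_mem_nil, or_false] at hB
    subst hB
    rw [Finset.disjoint_singleton]
    simpa using hxy

/-- `r₂`: `{x,y} ≻ {x,y,z}`. -/
def ceR2 (hT : ({x, y} : Finset X) ≠ {x, y, z}) : CoalRanking X where
  classes := [({({x, y} : Finset X)} : Finset (Finset X)),
    ({({x, y, z} : Finset X)} : Finset (Finset X))]
  class_nonempty := by
    intro C hC
    simp only [List.mem_cons, List.not_mem_nil, or_false] at hC
    rcases hC with rfl | rfl <;> exact Finset.singleton_nonempty _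
  coal_nonempty := by
    intro C hC S hS
    simp only [List.mem_cons, List.not_mem_nil, or_false] at hC
    rcases hC with rfl | rfl <;>
      · rw [Finset.mem_singleton] at hS; subst hS; exact Finset.insert_nonempty _ _
  classes_disjoint := by
    refine List.Pairwise.cons ?_ (List.pairwise_singleton _ _)
    intro B hB
    simp only [List.mem_cons, List.not_mem_nil, or_false] at hB
    subst hB
    rw [Finset.disjoint_singleton]
    exact hT

/-- `r`: `{x}, {x,y} ≻ {y}, {x,y,z}`. -/
def ceR (h12 : ({x} : Finset X) ≠ {y}) (h1T2 : ({x} : Finset X) ≠ {x, y, z})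
    (h2T1 : ({y} : Finset X) ≠ {x, y}) (hT : ({x, y} : Finset X) ≠ {x, y, z}) :
    CoalRanking X where
  classes := [({({x} : Finset X)} : Finset (Finset X)) ∪ ({({x, y} : Finset X)} : Finset (Finset X)),
    ({({y} : Finset X)} : Finset (Finset X)) ∪ ({({x, y, z} : Finset X)} : Finset (Finset X))]
  class_nonempty := by
    intro C hC
    simp only [List.mem_cons, List.not_mem_nil, or_false] at hC
    rcases hC with rfl | rfl <;>
      exact ⟨_, Finset.mem_union_left _ (Finset.mem_singleton_self _)⟩
  coal_nonempty := by
    intro C hC S hS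
    simp only [List.mem_cons, List.not_mem_nil, or_false] at hC
    rcases hC with rfl | rfl <;>
      · rw [Finset.mem_union, Finset.mem_singleton, Finset.mem_singleton] at hS
        rcases hS with rfl | rfl
        · first
            | exact Finset.singleton_nonempty _
            | exact Finset.insert_nonempty _ _
        · exact Finset.insert_nonempty _ _
  classes_disjoint := by
    refine List.Pairwise.cons ?_ (List.pairwise_singleton _ _)
    intro B hB
    simp only [List.mem_cons, List.not_mem_nil, or_false] at hB
    subst hB
    rw [Finset.disjoint_union_left, Finset.disjoint_union_right, Finset.disjoint_union_right]
    rw [Finset.disjoint_singleton, Finset.disjoint_singleton, Finset.disjoint_singleton,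
      Finset.disjoint_singleton]
    exact ⟨⟨h12, h1T2⟩, ⟨fun h => h2T1 h.symm, hT⟩⟩

end Counterexample

end SocRank

open SocRank

/-- S lex-cel satisfies CCON but satisfies neither TCON nor BCON. -/
theorem slexcel_ccon_not_tcon_not_bcon {X : Type*} [DecidableEq X] [Fintype X]
    (hX : 3 ≤ Fintype.card X) :
    CCON (slexcel : SRSMap X) ∧ ¬ TCON (slexcel : SRSMap X) ∧
      ¬ BCON (slexcel : SRSMap X) := by
  have hcard : 3 ≤ (Finset.univ : Finset X).card := by simpa using hX
  obtain ⟨s, -, hs3⟩ := Finset.exists_subset_card_eq (s := (Finset.univ : Finset X)) (n := 3) hcard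
  obtain ⟨x, y, z, hxy, hxz, hyz, -⟩ := Finset.card_eq_three.1 hs3
  have hyx := hxy.symm
  have hzx := hxz.symm
  have hzy := hyz.symm
  have hne : ∀ (a : X) (A B : Finset X), a ∈ B → a ∉ A → A ≠ B :=
    fun a A B hB hA h => hA (by rw [h]; exact hB)
  have h12 : ({x} : Finset X) ≠ {y} := hne y _ _ (by simp) (by simp [hyx])
  have h1T1 : ({x} : Finset X) ≠ {x, y} := hne y _ _ (by simp) (by simp [hyx])
  have h1T2 : ({x} : Finset X) ≠ {x, y, z} := hne y _ _ (by simp) (by simp [hyx])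
  have h2T1 : ({y} : Finset X) ≠ {x, y} := hne x _ _ (by simp) (by simp [hxy])
  have h2T2 : ({y} : Finset X) ≠ {x, y, z} := hne x _ _ (by simp) (by simp [hxy])
  have hT : ({x, y} : Finset X) ≠ {x, y, z} := hne z _ _ (by simp) (by simp [hzx, hzy])
  set r₁ : CoalRanking X := ceR1 x y hxy with hr₁
  set r₂ : CoalRanking X := ceR2 x y z hT with hr₂
  set r : CoalRanking X := ceR x y z h12 h1T2 h2T1 hT with hr
  have hdom : Disjoint r₁.domain r₂.domain := by
    rw [Finset.disjoint_left]
    intro A hA hB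
    simp only [hr₁, hr₂, CoalRanking.domain, ceR1, ceR2, List.foldr_cons, List.foldr_nil,
      Finset.union_empty, Finset.mem_union, Finset.mem_singleton] at hA hB
    rcases hA with rfl | rfl <;> rcases hB with h | h
    · exact h1T1 h
    · exact h1T2 h
    · exact h2T1 h
    · exact h2T2 h
  have hTop : CoalRanking.IsTopAlignedSum r r₁ r₂ := ⟨hdom, rfl⟩
  have hBot : CoalRanking.IsBottomAlignedSum r r₁ r₂ := ⟨hdom, rfl⟩
  have e1x : thetaDot r₁ x = [1, 0] := by
    simp [hr₁, ceR1, thetaDot, theta, sgn_cnt, hxy]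
  have e1y : thetaDot r₁ y = [0, 1] := by
    simp [hr₁, ceR1, thetaDot, theta, sgn_cnt, hyx]
  have e2x : thetaDot r₂ x = [1, 1] := by
    simp [hr₂, ceR2, thetaDot, theta, sgn_cnt]
  have e2y : thetaDot r₂ y = [1, 1] := by
    simp [hr₂, ceR2, thetaDot, theta, sgn_cnt]
  have erx : thetaDot r x = [1, 1] := by
    simp [hr, ceR, thetaDot, theta, sgn_cnt]
  have ery : thetaDot r y = [1, 1] := by
    simp [hr, ceR, thetaDot, theta, sgn_cnt]
  have hP1 : Pref (slexcel : SRSMap X) r₁ x y := by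
    constructor
    · show lexGE (thetaDot r₁ x) (thetaDot r₁ y)
      rw [e1x, e1y]; norm_num [lexGE]
    · show ¬ lexGE (thetaDot r₁ y) (thetaDot r₁ x)
      rw [e1x, e1y]; norm_num [lexGE]
  have hI2 : Ind (slexcel : SRSMap X) r₂ x y := by
    rw [ind_slexcel_iff, e2x, e2y]
  have hnP : ¬ Pref (slexcel : SRSMap X) r x y := by
    rintro ⟨-, h2⟩
    exact h2 (by show lexGE (thetaDot r y) (thetaDot r x); rw [erx, ery]; exact lexGE_refl _)
  refine ⟨slexcel_CCON, ?_, ?_⟩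
  · intro h
    exact hnP (((h r₁ r₂ r hTop) x y).2.2.1 hP1 hI2)
  · intro h
    exact hnP (((h r₁ r₂ r hBot) x y).2.2.1 hP1 hI2)
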